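/- For a finite directed graph G with all velocities equal to 1 and B its transposed line-graph adjacency matrix, the family defined by (T(t)f)(s) := B^k f(s + t − k), where k ∈ ℕ₀ is chosen so that k ≤ t + s < k + 1, is a C₀-semigroup on L¹([0,1], ℂ^{|E(G)|}): it satisfies T(0) = Id, T(t)T(r) = T(t+r) for t, r ≥ 0, and T(t)f → f in L¹ as t ↓ 0. -/

import Mathlib

open Filter MeasureTheory

/-- The flow `(T(t)f)(s) = B^k f(s+t-k)` with `k = ⌊t+s⌋`. -/
noncomputable def flowMap {m : ℕ} (B : Matrix (Fin m) (Fin m) ℂ) (t : ℝ)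
    (f : ℝ → Fin m → ℂ) : ℝ → Fin m → ℂ :=
  fun s => (B ^ Nat.floor (t + s)).mulVec (f (s + t - Nat.floor (t + s)))

section Aux

open Set

variable {m : ℕ}

/-- Crude bound: `∑ i |(Bv - v) i| ≤ C * ∑ j |v j|` with
`C = ∑ i ∑ j |B i j| + 1`. -/
lemma sum_abs_mulVec_sub_le (B : Matrix (Fin m) (Fin m) ℂ) (v : Fin m → ℂ) :
    ∑ i, ‖(B.mulVec v - v) i‖ ≤
      ((∑ i, ∑ j, ‖B i j‖) + 1) * ∑ j, ‖v j‖ := by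
  have h1 : ∀ i, ‖(B.mulVec v - v) i‖ ≤
      (∑ j, ‖B i j‖ * ‖v j‖) + ‖v i‖ := by
    intro i
    have : (B.mulVec v - v) i = (∑ j, B i j * v j) - v i := by
      simp [Matrix.mulVec, dotProduct]
    rw [this]
    refine (norm_sub_le _ _).trans ?_
    gcongr
    refine (norm_sum_le _ _).trans ?_
    simp [norm_mul]
  calc ∑ i, ‖(B.mulVec v - v) i‖
      ≤ ∑ i, ((∑ j, ‖B i j‖ * ‖v j‖) + ‖v i‖) :=
        Finset.sum_le_sum fun i _ => h1 i
    _ = (∑ i, ∑ j, ‖B i j‖ * ‖v j‖) + ∑ i, ‖v i‖ := by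
        rw [Finset.sum_add_distrib]
    _ ≤ (∑ i, ∑ j, ‖B i j‖) * (∑ j, ‖v j‖)
          + ∑ i, ‖v i‖ := by
        refine add_le_add_left ?_ _
        rw [Finset.sum_mul]
        refine Finset.sum_le_sum fun i _ => ?_
        rw [Finset.sum_mul]
        refine Finset.sum_le_sum fun j _ => ?_
        have hb : ‖v j‖ ≤ ∑ k, ‖v k‖ :=
          Finset.single_le_sum (f := fun k => ‖v k‖) (fun k _ => norm_nonneg _) (Finset.mem_univ j)
        exact mul_le_mul_of_nonneg_left hb (norm_nonneg _)
    _ = ((∑ i, ∑ j, ‖B i j‖) + 1) * ∑ j, ‖v j‖ := by ring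

end Aux


section Part3

open Set MeasureTheory

variable {m : ℕ}

lemma tendsto_flow_aux (B : Matrix (Fin m) (Fin m) ℂ) (f : ℝ → Fin m → ℂ)
    (hmeas : ∀ i, Measurable fun s => f s i)
    (hint : ∀ i, IntegrableOn (fun s => ‖f s i‖) (Set.Ico (0 : ℝ) 1)) :
    Tendsto
      (fun t : ℝ => ∫ s in Set.Ico (0 : ℝ) 1,
        ∑ i, ‖flowMap B t f s i - f s i‖)
      (nhdsWithin 0 (Set.Ioi 0)) (nhds 0) := by
  classical
  set C : ℝ := (∑ i, ∑ j, ‖B i j‖) + 1 with hCdef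
  have hC0 : 0 ≤ C := by
    have : (0:ℝ) ≤ ∑ i, ∑ j, ‖B i j‖ :=
      Finset.sum_nonneg fun i _ => Finset.sum_nonneg fun j _ => norm_nonneg _
    linarith
  set φ : ℝ → ℝ := fun u => ∑ i, ‖f u i‖ with hφdef
  have hφ0 : ∀ u, 0 ≤ φ u := fun u =>
    Finset.sum_nonneg fun i _ => norm_nonneg _
  have hφm : Measurable φ := by
    exact Finset.measurable_sum _ fun i _ => (continuous_norm.measurable).comp (hmeas i)
  have hφint : IntegrableOn φ (Ico (0:ℝ) 1) :=
    integrable_finset_sum _ (fun i _ => hint i)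
  have hfm : Measurable f := measurable_pi_lambda _ hmeas
  have hfint : IntegrableOn f (Ico (0:ℝ) 1) := by
    refine Integrable.mono' hφint hfm.stronglyMeasurable.aestronglyMeasurable.restrict ?_
    refine Filter.Eventually.of_forall fun s => ?_
    refine (pi_norm_le_iff_of_nonneg (hφ0 s)).2 fun i => ?_
    exact Finset.single_le_sum (f := fun j => ‖f s j‖)
      (fun j _ => norm_nonneg _) (Finset.mem_univ i)
  have hIoc_Ico : (volume : Measure ℝ).restrict (Ioc (0:ℝ) 1)
      = (volume : Measure ℝ).restrict (Ico (0:ℝ) 1) :=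
    Measure.restrict_congr_set ((Ioo_ae_eq_Ioc (μ := volume)).symm.trans Ioo_ae_eq_Ico)
  -- the circle picture
  set F : AddCircle (1:ℝ) → (Fin m → ℂ) := AddCircle.liftIco 1 0 f with hFdef
  have hF_coe : ∀ x : ℝ, x ∈ Ico (0:ℝ) 1 → F ↑x = f x := by
    intro x hx
    exact AddCircle.liftIco_coe_apply (by simpa using hx)
  have hFmeas : Measurable F :=
    (hfm.comp measurable_subtype_coe).comp (AddCircle.measurableEquivIco 1 0).measurable
  have hFaesm : AEStronglyMeasurable F (volume : Measure (AddCircle (1:ℝ))) :=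
    hFmeas.stronglyMeasurable.aestronglyMeasurable
  have hmk : MeasurePreserving ((↑) : ℝ → AddCircle (1:ℝ))
      ((volume : Measure ℝ).restrict (Ioc (0:ℝ) (0+1))) volume :=
    AddCircle.measurePreserving_mk 1 0
  have hFcirc_ae : (fun x : ℝ => F ↑x)
      =ᵐ[(volume : Measure ℝ).restrict (Ioc (0:ℝ) 1)] f := by
    rw [hIoc_Ico]
    exact (ae_restrict_iff' measurableSet_Ico).2
      (Filter.Eventually.of_forall fun x hx => hF_coe x hx)
  have hFint : Integrable F (volume : Measure (AddCircle (1:ℝ))) := by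
    refine (hmk.integrable_comp hFaesm).1 ?_
    have h1 : Integrable f ((volume : Measure ℝ).restrict (Ioc (0:ℝ) 1)) := by
      rw [hIoc_Ico]; exact hfint
    have : (F ∘ ((↑) : ℝ → AddCircle (1:ℝ)))
        =ᵐ[(volume : Measure ℝ).restrict (Ioc (0:ℝ) (0+1))] f := by
      simpa [zero_add, Function.comp_def] using hFcirc_ae
    rw [show ((0:ℝ)+1) = 1 by norm_num] at this ⊢
    exact h1.congr this.symm
  set F₁ : Lp (Fin m → ℂ) 1 (volume : Measure (AddCircle (1:ℝ))) :=
    Integrable.toL1 F hFint with hF₁def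
  -- rotations
  have hcoeC : Continuous ((↑) : ℝ → AddCircle (1:ℝ)) := AddCircle.continuous_mk' 1
  have hrotcont : Continuous fun p : ℝ × AddCircle (1:ℝ) =>
      p.2 + ((p.1 : ℝ) : AddCircle (1:ℝ)) :=
    continuous_snd.add (hcoeC.comp continuous_fst)
  set rot : ℝ → C(AddCircle (1:ℝ), AddCircle (1:ℝ)) :=
    fun t => ⟨fun x => x + ((t : ℝ) : AddCircle (1:ℝ)),
      continuous_id.add continuous_const⟩ with hrotdef
  have hrotC : Continuous rot :=
    ContinuousMap.continuous_of_continuous_uncurry _ hrotcont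
  have hrot : ∀ t : ℝ, MeasurePreserving (⇑(rot t))
      (volume : Measure (AddCircle (1:ℝ))) volume := fun t =>
    measurePreserving_add_right volume _
  have hΦtend := Filter.Tendsto.compMeasurePreservingLp
    (tendsto_const_nhds (x := F₁) (f := nhdsWithin (0:ℝ) (Set.Ioi 0)))
    ((hrotC.tendsto 0).mono_left nhdsWithin_le_nhds) hrot (hrot 0) (by norm_num)
  have hΦ0 : (Lp.compMeasurePreserving (⇑(rot 0)) (hrot 0)) F₁ = F₁ := by
    refine Lp.ext ?_
    refine (Lp.coeFn_compMeasurePreserving F₁ (hrot 0)).trans ?_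
    have : ⇑F₁ ∘ ⇑(rot 0) = ⇑F₁ := by
      funext x
      simp [hrotdef]
    rw [this]
  rw [hΦ0] at hΦtend
  have hnorm : Tendsto
      (fun t : ℝ => ‖(Lp.compMeasurePreserving (⇑(rot t)) (hrot t)) F₁ - F₁‖)
      (nhdsWithin (0:ℝ) (Set.Ioi 0)) (nhds 0) :=
    tendsto_iff_norm_sub_tendsto_zero.1 hΦtend
  -- identify the L¹ norm with an integral over the circle
  have hNid : ∀ t : ℝ, ‖(Lp.compMeasurePreserving (⇑(rot t)) (hrot t)) F₁ - F₁‖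
      = ∫ x : AddCircle (1:ℝ), ‖F (x + ((t:ℝ) : AddCircle (1:ℝ))) - F x‖ := by
    intro t
    rw [L1.norm_eq_integral_norm]
    refine integral_congr_ae ?_
    have h1 := Lp.coeFn_sub ((Lp.compMeasurePreserving (⇑(rot t)) (hrot t)) F₁) F₁
    have h2 := Lp.coeFn_compMeasurePreserving F₁ (hrot t)
    have h3 : ⇑F₁ =ᵐ[(volume : Measure (AddCircle (1:ℝ)))] F := hFint.coeFn_toL1
    have h4 : (⇑F₁ ∘ ⇑(rot t)) =ᵐ[(volume : Measure (AddCircle (1:ℝ)))]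
        (F ∘ ⇑(rot t)) := (hrot t).quasiMeasurePreserving.ae_eq_comp h3
    filter_upwards [h1, h2, h3, h4] with x hx1 hx2 hx3 hx4
    rw [hx1]
    simp only [Pi.sub_apply]
    rw [hx2, hx3, hx4]
    rfl
  set Ncirc : ℝ → ℝ := fun t =>
    ∫ x : AddCircle (1:ℝ), ‖F (x + ((t:ℝ) : AddCircle (1:ℝ))) - F x‖ with hNdef
  have hNtend : Tendsto Ncirc (nhdsWithin (0:ℝ) (Set.Ioi 0)) (nhds 0) := by
    refine hnorm.congr fun t => ?_
    exact hNid t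
  -- the tail integral
  set ψ : ℝ → ℝ := fun t => ∫ u in Ico (0:ℝ) t, φ u with hψdef
  have hψtend : Tendsto ψ (nhdsWithin (0:ℝ) (Set.Ioi 0)) (nhds 0) := by
    have hIcc : IntegrableOn φ (Icc (0:ℝ) 1) := by
      rwa [IntegrableOn, ← Measure.restrict_congr_set (Ico_ae_eq_Icc (μ := volume))]
    have hcont := intervalIntegral.continuousOn_primitive (a := 0) (b := 1)
      (μ := volume) hIcc
    have h0 := hcont 0 (by norm_num : (0:ℝ) ∈ Icc (0:ℝ) 1)
    have h0' : Tendsto (fun x : ℝ => ∫ u in Ioc (0:ℝ) x, φ u)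
        (nhdsWithin (0:ℝ) (Icc (0:ℝ) 1)) (nhds 0) := by
      have hz : (∫ u in Ioc (0:ℝ) (0:ℝ), φ u) = 0 := by simp
      simpa [ContinuousWithinAt, hz] using h0
    have hmono : nhdsWithin (0:ℝ) (Set.Ioi 0) ≤ nhdsWithin (0:ℝ) (Icc (0:ℝ) 1) := by
      rw [← nhdsWithin_Ioo_eq_nhdsGT (zero_lt_one (α := ℝ))]
      exact nhdsWithin_mono 0 Ioo_subset_Icc_self
    refine (h0'.mono_left hmono).congr fun x => ?_
    refine setIntegral_congr_set ?_
    exact (Ioo_ae_eq_Ioc (μ := volume)).symm.trans Ioo_ae_eq_Ico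
  -- main estimate for 0 < t < 1
  have hbound : ∀ t ∈ Ioo (0:ℝ) 1,
      (∫ s in Ico (0:ℝ) 1, ∑ i, ‖flowMap B t f s i - f s i‖)
        ≤ (m:ℝ) * Ncirc t + C * ψ t := by
    intro t ht
    obtain ⟨ht0, ht1⟩ := ht
    set G : ℝ → Fin m → ℂ := fun s =>
      F (((s:ℝ) : AddCircle (1:ℝ)) + ((t:ℝ) : AddCircle (1:ℝ))) - F ((s:ℝ) : AddCircle (1:ℝ))
      with hGdef
    set W : ℝ → ℝ := Set.indicator (Ico (0:ℝ) t) (fun u => C * φ u) with hWdef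
    have hW0 : ∀ u, 0 ≤ W u := fun u =>
      Set.indicator_nonneg (fun u _ => mul_nonneg hC0 (hφ0 u)) u
    -- pointwise estimate
    have hpt : ∀ s ∈ Ico (0:ℝ) 1,
        ∑ i, ‖flowMap B t f s i - f s i‖
          ≤ (m:ℝ) * ‖G s‖ + W (s + (t - 1)) := by
      intro s hs
      obtain ⟨hs0, hs1⟩ := hs
      have hsum_le : ∀ v : Fin m → ℂ, (∑ i, ‖(G s) i‖) ≤ (m:ℝ) * ‖G s‖ := by
        intro v
        calc ∑ i, ‖(G s) i‖ ≤ ∑ _i : Fin m, ‖G s‖ := by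
              refine Finset.sum_le_sum fun i _ => ?_
              exact norm_le_pi_norm (G s) i
          _ = (m:ℝ) * ‖G s‖ := by simp [mul_comm]
      rcases lt_or_ge (s + t) 1 with hcase | hcase
      · -- no wrap-around
        have hfl : Nat.floor (t + s) = 0 := Nat.floor_eq_zero.mpr (by linarith)
        have hflow : flowMap B t f s = f (s + t) := by
          simp [flowMap, hfl, Matrix.one_mulVec]
        have hGs : G s = f (s + t) - f s := by
          show F (↑s + ↑t) - F ↑s = f (s + t) - f s
          have hco : (((s:ℝ) : AddCircle (1:ℝ)) + ((t:ℝ) : AddCircle (1:ℝ)))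
              = (((s+t : ℝ)) : AddCircle (1:ℝ)) := rfl
          rw [hco, hF_coe (s+t) ⟨by linarith, hcase⟩, hF_coe s ⟨hs0, hs1⟩]
        have : ∑ i, ‖flowMap B t f s i - f s i‖ = ∑ i, ‖(G s) i‖ := by
          rw [hflow, hGs]
          simp [Pi.sub_apply]
        rw [this]
        have := hsum_le (f s)
        have hWnn := hW0 (s + (t-1))
        linarith
      · -- wrap-around
        have hfl : Nat.floor (t + s) = 1 := by
          rw [Nat.floor_eq_iff (by linarith : (0:ℝ) ≤ t + s)]
          refine ⟨by push_cast; linarith, by push_cast; linarith⟩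
        set v : Fin m → ℂ := f (s + t - 1) with hvdef
        have hflow : flowMap B t f s = B.mulVec v := by
          simp only [flowMap, hfl, pow_one, Nat.cast_one]; rfl
        have hmem : s + t - 1 ∈ Ico (0:ℝ) 1 := ⟨by linarith, by linarith⟩
        have hGs : G s = v - f s := by
          show F (↑s + ↑t) - F ↑s = v - f s
          have hco : (((s:ℝ) : AddCircle (1:ℝ)) + ((t:ℝ) : AddCircle (1:ℝ)))
              = (((s + t - 1 : ℝ)) : AddCircle (1:ℝ)) := by
            have hper := AddCircle.coe_add_period 1 (s + t - 1)
            rw [show (s + t - 1) + 1 = s + t by ring] at hper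
            exact hper
          rw [hco, hF_coe _ hmem, hF_coe s ⟨hs0, hs1⟩]
        have htri : ∑ i, ‖flowMap B t f s i - f s i‖
            ≤ (∑ i, ‖(B.mulVec v - v) i‖) + ∑ i, ‖(G s) i‖ := by
          rw [hflow, ← Finset.sum_add_distrib]
          refine Finset.sum_le_sum fun i _ => ?_
          have : B.mulVec v i - f s i = (B.mulVec v - v) i + (v - f s) i := by
            simp only [Pi.sub_apply]; ring
          rw [this, hGs]
          exact norm_add_le _ _
        have hBv : (∑ i, ‖(B.mulVec v - v) i‖) ≤ C * φ (s + t - 1) := by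
          rw [hCdef, hφdef]
          exact sum_abs_mulVec_sub_le B v
        have hWeq : W (s + (t - 1)) = C * φ (s + t - 1) := by
          have hmem2 : s + (t - 1) ∈ Ico (0:ℝ) t := ⟨by linarith, by linarith⟩
          show Set.indicator (Ico (0:ℝ) t) (fun u => C * φ u) (s + (t - 1)) = _
          rw [Set.indicator_of_mem hmem2, show s + (t - 1) = s + t - 1 by ring]
        have h1 := hsum_le v
        rw [hWeq]
        linarith [htri]
    -- integrability of the majorant
    have hGmeas : Measurable G := by
      have hcoe : Measurable ((↑) : ℝ → AddCircle (1:ℝ)) := AddCircle.measurable_mk'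
      exact ((hFmeas.comp ((hcoe.add_const _))).sub (hFmeas.comp hcoe))
    have hGnormmeas : Measurable fun s => ‖G s‖ := hGmeas.norm
    have hGint : IntegrableOn (fun s => ‖G s‖) (Ico (0:ℝ) 1) := by
      have hrotF : Integrable (F ∘ ⇑(rot t)) (volume : Measure (AddCircle (1:ℝ))) :=
        ((hrot t).integrable_comp hFaesm).2 hFint
      have h1 : Integrable ((F ∘ ⇑(rot t)) ∘ ((↑) : ℝ → AddCircle (1:ℝ)))
          ((volume : Measure ℝ).restrict (Ioc (0:ℝ) (0+1))) :=
        (hmk.integrable_comp hrotF.aestronglyMeasurable).2 hrotF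
      have h2 : Integrable (F ∘ ((↑) : ℝ → AddCircle (1:ℝ)))
          ((volume : Measure ℝ).restrict (Ioc (0:ℝ) (0+1))) :=
        (hmk.integrable_comp hFaesm).2 hFint
      rw [show ((0:ℝ)+1) = 1 by norm_num, hIoc_Ico] at h1 h2
      have : IntegrableOn G (Ico (0:ℝ) 1) := by
        have := h1.sub h2
        refine this.congr ?_
        refine Filter.Eventually.of_forall fun s => ?_
        rw [hGdef]
        simp [hrotdef, Function.comp]
      exact this.norm
    have hWm : Measurable W :=
      ((measurable_const.mul hφm).indicator measurableSet_Ico)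
    have hWint : Integrable W (volume : Measure ℝ) := by
      have h1 : IntegrableOn (fun u => C * φ u) (Ico (0:ℝ) t) :=
        IntegrableOn.mono_set (hφint.const_mul C) (Ico_subset_Ico le_rfl ht1.le)
      exact h1.integrable_indicator measurableSet_Ico
    have hWs_int : Integrable (fun s => W (s + (t - 1))) (volume : Measure ℝ) :=
      ((measurePreserving_add_right volume (t-1)).integrable_comp
        hWm.stronglyMeasurable.aestronglyMeasurable).2 hWint
    -- put the estimate together
    have hmain : (∫ s in Ico (0:ℝ) 1, ∑ i, ‖flowMap B t f s i - f s i‖)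
        ≤ ∫ s in Ico (0:ℝ) 1, ((m:ℝ) * ‖G s‖ + W (s + (t - 1))) := by
      refine integral_mono_of_nonneg ?_ ?_ ?_
      · exact Filter.Eventually.of_forall fun s =>
          Finset.sum_nonneg fun i _ => norm_nonneg _
      · exact (hGint.const_mul (m:ℝ)).add hWs_int.integrableOn
      · exact (ae_restrict_iff' measurableSet_Ico).2 (Filter.Eventually.of_forall hpt)
    have hsplit : (∫ s in Ico (0:ℝ) 1, ((m:ℝ) * ‖G s‖ + W (s + (t - 1))))
        = (m:ℝ) * (∫ s in Ico (0:ℝ) 1, ‖G s‖) + ∫ s in Ico (0:ℝ) 1, W (s + (t - 1)) := by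
      rw [integral_add (hGint.const_mul (m:ℝ)) hWs_int.integrableOn, integral_const_mul]
    have hGeq : (∫ s in Ico (0:ℝ) 1, ‖G s‖) = Ncirc t := by
      show _ = ∫ x : AddCircle (1:ℝ), ‖F (x + ((t:ℝ) : AddCircle (1:ℝ))) - F x‖
      rw [← hIoc_Ico]
      have h5 := AddCircle.integral_preimage 1 0
        (fun x : AddCircle (1:ℝ) => ‖F (x + ((t:ℝ) : AddCircle (1:ℝ))) - F x‖)
      rw [zero_add] at h5
      exact h5
    have hWle : (∫ s in Ico (0:ℝ) 1, W (s + (t - 1))) ≤ C * ψ t := by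
      have h1 : (∫ s in Ico (0:ℝ) 1, W (s + (t - 1))) ≤ ∫ s : ℝ, W (s + (t - 1)) :=
        setIntegral_le_integral hWs_int (Filter.Eventually.of_forall fun s => hW0 _)
      have h2 : (∫ s : ℝ, W (s + (t - 1))) = ∫ s : ℝ, W s :=
        integral_add_right_eq_self W (t - 1)
      have h3 : (∫ s : ℝ, W s) = ∫ s in Ico (0:ℝ) t, C * φ s := by
        show (∫ s : ℝ, Set.indicator (Ico (0:ℝ) t) (fun u => C * φ u) s) = _
        rw [integral_indicator measurableSet_Ico]
      have h4 : (∫ s in Ico (0:ℝ) t, C * φ s) = C * ψ t := by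
        show _ = C * ∫ u in Ico (0:ℝ) t, φ u
        rw [integral_const_mul]
      linarith
    calc (∫ s in Ico (0:ℝ) 1, ∑ i, ‖flowMap B t f s i - f s i‖)
        ≤ ∫ s in Ico (0:ℝ) 1, ((m:ℝ) * ‖G s‖ + W (s + (t - 1))) := hmain
      _ = (m:ℝ) * (∫ s in Ico (0:ℝ) 1, ‖G s‖) + ∫ s in Ico (0:ℝ) 1, W (s + (t - 1)) := hsplit
      _ ≤ (m:ℝ) * Ncirc t + C * ψ t := by
          rw [hGeq]
          exact add_le_add_right hWle _
  -- squeeze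
  have hnn : ∀ t : ℝ, 0 ≤ ∫ s in Ico (0:ℝ) 1, ∑ i, ‖flowMap B t f s i - f s i‖ :=
    fun t => integral_nonneg fun s => Finset.sum_nonneg fun i _ => norm_nonneg _
  refine squeeze_zero' (g := fun t => (m:ℝ) * Ncirc t + C * ψ t)
    (Filter.Eventually.of_forall hnn) ?_ ?_
  · filter_upwards [Ioo_mem_nhdsGT_of_mem (by constructor <;> norm_num :
      (0:ℝ) ∈ Ico (0:ℝ) 1)] with t ht
    exact hbound t ht
  · have h := (hNtend.const_mul (m:ℝ)).add (hψtend.const_mul C)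
    simpa using h

end Part3

/-- For a finite directed graph with all velocities `1` and `B` its
transposed line-graph adjacency matrix, the family `(T(t)f)(s) = B^⌊t+s⌋ f(s+t−⌊t+s⌋)`
is a C₀-semigroup on `L¹([0,1], ℂ^m)`: `T(0) = Id`, `T(t)T(r) = T(t+r)` for `t, r ≥ 0`,
and `T(t)f → f` in `L¹` as `t ↓ 0`. -/
theorem flow_semigroup
    {m : ℕ} (B : Matrix (Fin m) (Fin m) ℂ) (f : ℝ → Fin m → ℂ)
    (hmeas : ∀ i, Measurable fun s => f s i)
    (hint : ∀ i, IntegrableOn (fun s => ‖f s i‖) (Set.Ico (0 : ℝ) 1)) :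
    (∀ s ∈ Set.Ico (0 : ℝ) 1, flowMap B 0 f s = f s) ∧
    (∀ t r : ℝ, 0 ≤ t → 0 ≤ r → ∀ s ∈ Set.Ico (0 : ℝ) 1,
      flowMap B t (flowMap B r f) s = flowMap B (t + r) f s) ∧
    Tendsto
      (fun t : ℝ => ∫ s in Set.Ico (0 : ℝ) 1,
        ∑ i, ‖flowMap B t f s i - f s i‖)
      (nhdsWithin 0 (Set.Ioi 0)) (nhds 0) := by
  refine ⟨?_, ?_, ?_⟩
  · intro s hs
    have h0 : Nat.floor s = 0 := Nat.floor_eq_zero.mpr hs.2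
    simp [flowMap, h0, Matrix.one_mulVec]
  · intro t r ht hr s hs
    obtain ⟨hs0, hs1⟩ := hs
    set k := Nat.floor (t + s) with hkdef
    set K := Nat.floor (t + r + s) with hKdef
    have hts : (0:ℝ) ≤ t + s := by linarith
    have hk1 : (k:ℝ) ≤ t + s := Nat.floor_le hts
    have hk2 : t + s < k + 1 := Nat.lt_floor_add_one (t + s)
    have hkK : k ≤ K := Nat.floor_le_floor (by linarith)
    have hKcast : ((K - k : ℕ) : ℝ) = (K : ℝ) - (k : ℝ) := by
      push_cast [Nat.cast_sub hkK]; ring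
    have key : Nat.floor (r + (s + t - (k:ℝ))) = K - k := by
      have : r + (s + t - (k:ℝ)) = (t + r + s) - (k:ℕ) := by ring
      rw [this, Nat.floor_eq_iff (by linarith), hKcast]
      have hK1 : (K:ℝ) ≤ t + r + s := Nat.floor_le (by linarith)
      have hK2 : t + r + s < (K:ℝ) + 1 := Nat.lt_floor_add_one _
      constructor <;> linarith
    show (B ^ Nat.floor (t + s)).mulVec
        ((B ^ Nat.floor (r + (s + t - (Nat.floor (t+s) : ℕ)))).mulVec
          (f ((s + t - (Nat.floor (t+s) : ℕ)) + r - Nat.floor (r + (s + t - (Nat.floor (t+s) : ℕ)))))) = _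
    rw [← hkdef, key, Matrix.mulVec_mulVec, ← pow_add, Nat.add_sub_cancel' hkK]
    show (B ^ K).mulVec (f (s + t - k + r - ((K - k : ℕ) : ℝ))) = _
    rw [hKcast]
    have harg : s + t - (k:ℝ) + r - ((K:ℝ) - (k:ℝ)) = s + (t + r) - (K:ℝ) := by ring
    rw [harg]
    rfl
  · exact tendsto_flow_aux B f hmeas hint
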